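/- Let m, k with 0 < k < m, and let D be a deviation function from k-committees to nonempty deviations of size at most k such that |D(W)| = 1 for every k-committee W except possibly one committee W*, with t := |D(W*)|. Then there exists a probability distribution q over k-committees such that (1) for every vote A ⊆ C, the q-probability of the event |W ∩ A| < |D(W) ∩ A| is at most 1/(k+2−t), and (2) the q-expectation of |D(W)| equals (k+1)/(k+2−t). Consequently, 1/(k+2−t) − (1/k)·(k+1)/(k+2−t) = −1/(k(k+2−t)), so the dual linear program value for D is at most −1/(k(k+2−t)). -/

import Mathlib

/-- for a deviation function `D` that is singleton-valued except
possibly at one committee `Wstar` (with `t = |D(Wstar)|`), there is a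
distribution `q` over `k`-committees whose probability of any vote preferring
its deviation is at most `1/(k+2-t)`, whose expected deviation size equals
`(k+1)/(k+2-t)`, so the dual LP value for `D` is at most `-1/(k(k+2-t))`. -/
theorem stmt5 {C : Type*} [Fintype C] [DecidableEq C] (m k : ℕ)
    (hm : Fintype.card C = m) (hk : 0 < k) (hkm : k < m)
    (D : Finset C → Finset C)
    (hD : ∀ W : Finset C, W.card = k → (D W).Nonempty ∧ (D W).card ≤ k)
    (Wstar : Finset C) (hWstar : Wstar.card = k)
    (hsing : ∀ W : Finset C, W.card = k → W ≠ Wstar → (D W).card = 1)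
    (t : ℕ) (ht : t = (D Wstar).card) :
    ∃ q : Finset C → ℚ,
      (∀ W, 0 ≤ q W) ∧ (∀ W : Finset C, W.card ≠ k → q W = 0) ∧
      (∑ W : Finset C, q W = 1) ∧
      (∀ A : Finset C,
        (∑ W ∈ Finset.univ.filter
            (fun W : Finset C => W.card = k ∧ (W ∩ A).card < (D W ∩ A).card), q W)
          ≤ 1 / ((k : ℚ) + 2 - (t : ℚ))) ∧
      (∑ W : Finset C, q W * ((D W).card : ℚ)) = ((k : ℚ) + 1) / ((k : ℚ) + 2 - (t : ℚ)) ∧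
      1 / ((k : ℚ) + 2 - (t : ℚ)) - (1 / (k : ℚ)) * (((k : ℚ) + 1) / ((k : ℚ) + 2 - (t : ℚ)))
        = -(1 / ((k : ℚ) * ((k : ℚ) + 2 - (t : ℚ)))) := by
  classical
  obtain ⟨hDne, hDle⟩ := hD Wstar hWstar
  have ht1 : 1 ≤ t := by rw [ht]; exact Finset.card_pos.mpr hDne
  have htk : t ≤ k := by rw [ht]; exact hDle
  have hmC : k < Fintype.card C := by rw [hm]; exact hkm
  -- the pick lemma : any set of size ≤ k-1 extends to a k-committee ≠ Wstar
  have hpickE : ∀ U : Finset C, U.card ≤ k - 1 →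
      ∃ W : Finset C, U ⊆ W ∧ W.card = k ∧ W ≠ Wstar := by
    intro U hU
    have hcompl : (Wstarᶜ : Finset C).Nonempty := by
      rw [← Finset.card_pos, Finset.card_compl, hWstar]; omega
    obtain ⟨b, hb⟩ := hcompl
    have hb' : b ∉ Wstar := Finset.mem_compl.mp hb
    have hcard : (insert b U).card ≤ k := by
      have := Finset.card_insert_le b U; omega
    obtain ⟨W, hW1, hW2⟩ := Finset.exists_superset_card_eq hcard (le_of_lt hmC)
    exact ⟨W, (Finset.subset_insert b U).trans hW1, hW2,
      fun h => hb' (h ▸ hW1 (Finset.mem_insert_self b U))⟩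
  have H : ∀ U : Finset C, ∃ W : Finset C, U.card ≤ k - 1 →
      U ⊆ W ∧ W.card = k ∧ W ≠ Wstar := by
    intro U
    by_cases h : U.card ≤ k - 1
    · obtain ⟨W, hW⟩ := hpickE U h
      exact ⟨W, fun _ => hW⟩
    · exact ⟨∅, fun h' => absurd h' h⟩
  choose pick hpick using H
  -- the recursive chain of committees: f n = committee, acc n = union of deviations so far
  set g : ℕ → Finset C × Finset C := fun n =>
    Nat.rec (Wstar, D Wstar) (fun _ p => (pick p.2, p.2 ∪ D (pick p.2))) n with hg
  set f : ℕ → Finset C := fun n => (g n).1 with hf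
  set acc : ℕ → Finset C := fun n => (g n).2 with hacc
  have hf0 : f 0 = Wstar := rfl
  have hacc0 : acc 0 = D Wstar := rfl
  have hfs : ∀ n, f (n + 1) = pick (acc n) := fun n => rfl
  have haccs : ∀ n, acc (n + 1) = acc n ∪ D (f (n + 1)) := fun n => rfl
  have haccmono : Monotone acc := by
    apply monotone_nat_of_le_succ
    intro n
    rw [haccs n]
    exact Finset.subset_union_left
  have hDsubacc : ∀ n, D (f n) ⊆ acc n := by
    intro n
    cases n with
    | zero => rw [hf0, hacc0]
    | succ n => rw [haccs n]; exact Finset.subset_union_right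
  -- cardinality bound for acc, and properties of f
  have hacccard : ∀ n, n ≤ k - t → (acc n).card ≤ t + n := by
    intro n
    induction n with
    | zero => intro _; rw [hacc0, ← ht]; omega
    | succ n ih =>
      intro hn
      have hn' : n ≤ k - t := by omega
      have h1 : (acc n).card ≤ t + n := ih hn'
      have h2 : (acc n).card ≤ k - 1 := by omega
      obtain ⟨hsub, hcard, hne⟩ := hpick (acc n) h2
      have hD1 : (D (f (n + 1))).card = 1 := by
        rw [hfs n]; exact hsing _ hcard hne
      rw [haccs n]
      calc (acc n ∪ D (f (n + 1))).card ≤ (acc n).card + (D (f (n + 1))).card :=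
            Finset.card_union_le _ _
        _ ≤ t + n + 1 := by omega
  have hfprop : ∀ n, n + 1 ≤ k - t →
      acc n ⊆ f (n + 1) ∧ (f (n + 1)).card = k ∧ f (n + 1) ≠ Wstar := by
    intro n hn
    have h1 : (acc n).card ≤ t + n := hacccard n (by omega)
    have h2 : (acc n).card ≤ k - 1 := by omega
    rw [hfs n]
    exact hpick (acc n) h2
  -- decomposition of acc as D Wstar ∪ union of singletons
  have haccdec : ∀ n, acc n = D Wstar ∪ (Finset.Icc 1 n).biUnion (fun i => D (f i)) := by
    intro n
    induction n with
    | zero => simp [hacc0]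
    | succ n ih =>
      rw [haccs n, ih, ← Finset.insert_Icc_right_eq_Icc_add_one (by omega : 1 ≤ n + 1),
        Finset.biUnion_insert, Finset.union_assoc,
        Finset.union_comm ((Finset.Icc 1 n).biUnion fun i => D (f i)) (D (f (n + 1)))]
      rfl
  -- the last committee
  have hWlE : ∃ Wl : Finset C, Wl.card = k ∧ Wl ≠ Wstar ∧
      (∀ n, n + 1 ≤ k - t → D (f (n + 1)) ⊆ Wl) ∧
      (D Wstar ⊆ Wl ∨ D Wstar ⊆ Wstar) := by
    by_cases hch : ∃ W : Finset C, acc (k - t) ⊆ W ∧ W.card = k ∧ W ≠ Wstar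
    · obtain ⟨W, h1, h2, h3⟩ := hch
      refine ⟨W, h2, h3, ?_, Or.inl ?_⟩
      · intro n hn
        exact ((hDsubacc (n + 1)).trans (haccmono hn)).trans h1
      · rw [← hacc0]
        exact (haccmono (Nat.zero_le _)).trans h1
    · -- bad case: acc (k - t) = Wstar
      have hUk : (acc (k - t)).card ≤ k := by
        have := hacccard (k - t) le_rfl; omega
      have hUcard : (acc (k - t)).card = k := by
        by_contra h
        have : (acc (k - t)).card ≤ k - 1 := by omega
        exact hch (hpickE _ this)
      have hUeq : acc (k - t) = Wstar := by
        by_contra h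
        exact hch ⟨acc (k - t), subset_rfl, hUcard, h⟩
      have hDW : D Wstar ⊆ Wstar := by
        have h1 : acc 0 ⊆ acc (k - t) := haccmono (Nat.zero_le _)
        rw [hacc0, hUeq] at h1
        exact h1
      set X : Finset C := (Finset.Icc 1 (k - t)).biUnion (fun i => D (f i)) with hX
      have hXcard : X.card ≤ k - t := by
        calc X.card ≤ ∑ i ∈ Finset.Icc 1 (k - t), (D (f i)).card := Finset.card_biUnion_le
          _ ≤ ∑ _i ∈ Finset.Icc 1 (k - t), 1 := by
              apply Finset.sum_le_sum
              intro i hi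
              simp only [Finset.mem_Icc] at hi
              obtain ⟨i, rfl⟩ : ∃ j, j + 1 = i := ⟨i - 1, by omega⟩
              obtain ⟨_, hc, hne⟩ := hfprop i (by omega)
              rw [hsing _ hc hne]
          _ = k - t := by simp
      have hUX : acc (k - t) = D Wstar ∪ X := haccdec (k - t)
      have hdisj : Disjoint (D Wstar) X := by
        have h1 := Finset.card_union_add_card_inter (D Wstar) X
        have h2 : (D Wstar ∪ X).card = k := by rw [← hUX]; exact hUcard
        have h3 : (D Wstar).card = t := ht.symm
        have : (D Wstar ∩ X).card = 0 := by omega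
        rw [Finset.disjoint_iff_inter_eq_empty, ← Finset.card_eq_zero]
        exact this
      obtain ⟨y, hy⟩ := hDne
      have hyX : y ∉ X := fun hx => Finset.disjoint_left.mp hdisj hy hx
      have hXsub : X ⊆ Finset.univ.erase y := by
        intro x hx
        exact Finset.mem_erase.mpr ⟨fun h => hyX (h ▸ hx), Finset.mem_univ x⟩
      have herase : k ≤ (Finset.univ.erase y : Finset C).card := by
        rw [Finset.card_erase_of_mem (Finset.mem_univ y), Finset.card_univ, hm]
        omega
      obtain ⟨Wl, hXW, hWe, hWc⟩ :=
        Finset.exists_subsuperset_card_eq hXsub (by omega) herase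
      have hyWl : y ∉ Wl := fun h => (Finset.mem_erase.mp (hWe h)).1 rfl
      refine ⟨Wl, hWc, ?_, ?_, Or.inr hDW⟩
      · intro h
        exact hyWl (h ▸ hDW hy)
      · intro n hn
        have hmem : n + 1 ∈ Finset.Icc 1 (k - t) := by
          simp only [Finset.mem_Icc]; omega
        exact (Finset.subset_biUnion_of_mem (fun i => D (f i)) hmem).trans hXW
  obtain ⟨Wl, hWlc, hWlne, hWlD, hWlstar⟩ := hWlE
  -- the sequence of N committees
  set N : ℕ := k + 2 - t with hNdef
  set s : ℕ → Finset C := fun i => if i = k + 1 - t then Wl else f i with hs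
  have hs0 : s 0 = Wstar := by
    simp only [hs, if_neg (by omega : ¬(0 = k + 1 - t))]; exact hf0
  have hski : ∀ i, 1 ≤ i → i < N → (s i).card = k ∧ s i ≠ Wstar := by
    intro i h1 h2
    simp only [hs]
    by_cases hil : i = k + 1 - t
    · rw [if_pos hil]; exact ⟨hWlc, hWlne⟩
    · rw [if_neg hil]
      obtain ⟨n, rfl⟩ : ∃ j, j + 1 = i := ⟨i - 1, by omega⟩
      obtain ⟨_, hc, hne⟩ := hfprop n (by omega)
      exact ⟨hc, hne⟩
  have hscard : ∀ i, i < N → (s i).card = k := by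
    intro i hi
    rcases Nat.eq_zero_or_pos i with h | h
    · rw [h, hs0]; exact hWstar
    · exact (hski i h hi).1
  -- chain property : for i < j < N, D (s i) ⊆ s j, or special case
  have hchain : ∀ i j, i < j → j < N → D (s i) ⊆ s j ∨ (i = 0 ∧ D Wstar ⊆ Wstar) := by
    intro i j hij hjN
    have hj1 : 1 ≤ j := by omega
    by_cases hjl : j = k + 1 - t
    · -- s j = Wl
      have hsj : s j = Wl := by simp only [hs]; exact if_pos hjl
      rcases Nat.eq_zero_or_pos i with hi0 | hi1
      · rcases hWlstar with hc | hc
        · left; rw [hi0, hs0, hsj]; exact hc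
        · right; exact ⟨hi0, hc⟩
      · left
        obtain ⟨n, rfl⟩ : ∃ m', m' + 1 = i := ⟨i - 1, by omega⟩
        have hsi : s (n + 1) = f (n + 1) := by
          simp only [hs]; exact if_neg (by omega)
        rw [hsi, hsj]
        exact hWlD n (by omega)
    · -- s j = f j with j ≤ k - t
      left
      have hjkt : j ≤ k - t := by omega
      have hsj : s j = f j := by simp only [hs]; exact if_neg hjl
      obtain ⟨n, rfl⟩ : ∃ m', m' + 1 = j := ⟨j - 1, by omega⟩
      obtain ⟨hsub, _, _⟩ := hfprop n (by omega)
      have hsi : s i = f i := by simp only [hs]; exact if_neg (by omega)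
      rw [hsi, hsj]
      exact ((hDsubacc i).trans (haccmono (by omega : i ≤ n))).trans hsub
  -- exclusivity of events
  have hexcl : ∀ (A : Finset C) i j, i < j → j < N →
      (s i ∩ A).card < (D (s i) ∩ A).card → (s j ∩ A).card < (D (s j) ∩ A).card → False := by
    intro A i j hij hjN hEi hEj
    have hj := hski j (by omega) hjN
    have hDj1 : (D (s j)).card = 1 := hsing _ hj.1 hj.2
    have hjA : (s j ∩ A) = ∅ := by
      have h1 : (D (s j) ∩ A).card ≤ 1 := le_trans (Finset.card_le_card
        Finset.inter_subset_left) (le_of_eq hDj1)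
      rw [← Finset.card_eq_zero]
      omega
    rcases hchain i j hij hjN with hsub | ⟨hi0, hstar⟩
    · have hne : (D (s i) ∩ A).Nonempty := by
        rw [← Finset.card_pos]; omega
      obtain ⟨a, ha⟩ := hne
      have : a ∈ s j ∩ A := Finset.mem_inter.mpr
        ⟨hsub (Finset.mem_inter.mp ha).1, (Finset.mem_inter.mp ha).2⟩
      rw [hjA] at this
      exact absurd this (Finset.notMem_empty a)
    · rw [hi0, hs0] at hEi
      have : (D Wstar ∩ A).card ≤ (Wstar ∩ A).card :=
        Finset.card_le_card (Finset.inter_subset_inter_right hstar)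
      omega
  -- the distribution
  set q : Finset C → ℚ :=
    fun W => (((Finset.range N).filter (fun i => s i = W)).card : ℚ) / N with hq
  have hN2 : 2 ≤ N := by omega
  have hNQpos : (0 : ℚ) < (N : ℚ) := by positivity
  have hNcast : ((N : ℚ)) = (k : ℚ) + 2 - (t : ℚ) := by
    rw [hNdef, Nat.cast_sub (by omega : t ≤ k + 2)]
    push_cast; ring
  refine ⟨q, ?_, ?_, ?_, ?_, ?_, ?_⟩
  · -- nonnegativity
    intro W
    simp only [hq]
    positivity
  · -- zero off k-committees
    intro W hW
    simp only [hq]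
    have : (Finset.range N).filter (fun i => s i = W) = ∅ := by
      apply Finset.filter_false_of_mem
      intro i hi heq
      exact hW (heq ▸ hscard i (Finset.mem_range.mp hi))
    rw [this]
    simp
  · -- sums to 1
    simp only [hq]
    rw [← Finset.sum_div]
    rw [div_eq_one_iff_eq (ne_of_gt hNQpos)]
    rw [← Nat.cast_sum]
    rw [Finset.sum_card_fiberwise_eq_card_filter]
    simp
  · -- probability bound
    intro A
    have hkey : ∑ W ∈ Finset.univ.filter
        (fun W : Finset C => W.card = k ∧ (W ∩ A).card < (D W ∩ A).card), q W
        = (((Finset.range N).filter (fun i => s i ∈ Finset.univ.filter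
            (fun W : Finset C => W.card = k ∧ (W ∩ A).card < (D W ∩ A).card))).card : ℚ) / N := by
      rw [hq, ← Finset.sum_div, ← Nat.cast_sum, Finset.sum_card_fiberwise_eq_card_filter]
    rw [hkey]
    have hle1 : ((Finset.range N).filter (fun i => s i ∈ Finset.univ.filter
        (fun W : Finset C => W.card = k ∧ (W ∩ A).card < (D W ∩ A).card))).card ≤ 1 := by
      rw [Finset.card_le_one]
      intro a ha b hb
      simp only [Finset.mem_filter, Finset.mem_range, Finset.mem_univ, true_and] at ha hb
      by_contra hne
      rcases Nat.lt_or_ge a b with h | h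
      · exact hexcl A a b h hb.1 ha.2.2 hb.2.2
      · have h' : b < a := by omega
        exact hexcl A b a h' ha.1 hb.2.2 ha.2.2
    rw [← hNcast]
    rw [div_le_div_iff_of_pos_right hNQpos]
    exact_mod_cast hle1
  · -- expectation
    have hsum : ∑ i ∈ Finset.range N, (D (s i)).card = k + 1 := by
      obtain ⟨N', hN'⟩ : ∃ N', N = N' + 1 := ⟨N - 1, by omega⟩
      rw [hN', Finset.sum_range_succ']
      have h1 : ∑ i ∈ Finset.range N', (D (s (i + 1))).card = N' := by
        calc ∑ i ∈ Finset.range N', (D (s (i + 1))).card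
            = ∑ _i ∈ Finset.range N', 1 := by
              refine Finset.sum_congr rfl (fun i hi => ?_)
              have hi' : i + 1 < N := by
                have := Finset.mem_range.mp hi; omega
              have := hski (i + 1) (by omega) hi'
              exact hsing _ this.1 this.2
          _ = N' := by simp
      rw [h1, hs0, ← ht]
      omega
    simp only [hq]
    have hconst : ∀ W : Finset C,
        (((Finset.range N).filter (fun i => s i = W)).card : ℚ) / (N : ℚ) * ((D W).card : ℚ)
        = (∑ _i ∈ (Finset.range N).filter (fun i => s i = W), ((D W).card : ℚ)) / (N : ℚ) := by
      intro W
      rw [Finset.sum_const, nsmul_eq_mul]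
      ring
    rw [Finset.sum_congr rfl (fun W _ => hconst W), ← Finset.sum_div,
      Finset.sum_fiberwise_eq_sum_filter' (Finset.range N) Finset.univ s
        (fun W => ((D W).card : ℚ))]
    simp only [Finset.mem_univ, Finset.filter_true]
    rw [show ∑ i ∈ Finset.range N, ((D (s i)).card : ℚ)
        = ((∑ i ∈ Finset.range N, (D (s i)).card : ℕ) : ℚ) from (Nat.cast_sum _ _).symm,
      hsum, ← hNcast]
    push_cast
    try ring
  · -- algebra
    have hkQ : (k : ℚ) ≠ 0 := Nat.cast_ne_zero.mpr (by omega)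
    have hNQ : (k : ℚ) + 2 - (t : ℚ) ≠ 0 := by rw [← hNcast]; exact ne_of_gt hNQpos
    field_simp
    try ring
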